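/- Let N and M be natural numbers with N > 0. Then the sum, over all functions f : Fin M → Fin N, of the number of collisions M - card (Finset.image f Finset.univ), divided by N^M, equals M - N + N * ((N-1)/N)^M (as real numbers). That is, the expected number of hash collisions among M independent uniform draws from a set of size N is C = M - N + N((N-1)/N)^M. -/
import Mathlib

open Finset

lemma count_avoid (N M : ℕ) (y : Fin N) :
    (Finset.univ.filter fun f : Fin M → Fin N => ∀ i, f i ≠ y).card = (N - 1) ^ M := by
  rw [← Fintype.card_subtype]
  rw [Fintype.card_congr (Equiv.subtypePiEquivPi (p := fun _ x => x ≠ y))]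
  simp [Fintype.card_pi]

lemma count_hit (N M : ℕ) (y : Fin N) :
    (Finset.univ.filter fun f : Fin M → Fin N => y ∈ Finset.image f Finset.univ).card
      = N ^ M - (N - 1) ^ M := by
  have h := Finset.card_filter_add_card_filter_not
    (s := (Finset.univ : Finset (Fin M → Fin N)))
    (p := fun f => y ∈ Finset.image f Finset.univ)
  have h2 : (Finset.univ.filter fun f : Fin M → Fin N => ¬ y ∈ Finset.image f Finset.univ).card
      = (N - 1) ^ M := by
    rw [← count_avoid N M y]
    congr 1
    apply Finset.filter_congr
    intro f _
    simp [eq_comm]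
  rw [h2] at h
  have hcard : (Finset.univ : Finset (Fin M → Fin N)).card = N ^ M := by
    simp [Fintype.card_fun]
  omega

lemma sum_card (N M : ℕ) :
    (∑ f : Fin M → Fin N, (Finset.image f Finset.univ).card)
      = N * (N ^ M - (N - 1) ^ M) := by
  have step : ∀ f : Fin M → Fin N, (Finset.image f Finset.univ).card
      = ∑ y : Fin N, if y ∈ Finset.image f Finset.univ then 1 else 0 := by
    intro f
    simp [Finset.sum_ite_mem, Finset.univ_inter]
  simp only [step]
  rw [Finset.sum_comm]
  have : ∀ y : Fin N, (∑ f : Fin M → Fin N, if y ∈ Finset.image f Finset.univ then 1 else 0)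
      = N ^ M - (N - 1) ^ M := by
    intro y
    rw [← Finset.card_filter, count_hit]
  simp only [this]
  simp [mul_comm]

/-- Equation (3) of the paper: the expected number of collisions among `M`
independent uniform draws from a set of size `N` is `M - N + N*((N-1)/N)^M`. -/
theorem expected_collisions (N M : ℕ) (hN : 0 < N) :
    (∑ f : Fin M → Fin N, ((M - (Finset.image f Finset.univ).card : ℕ) : ℝ)) / (N : ℝ) ^ M
      = (M : ℝ) - N + N * (((N : ℝ) - 1) / N) ^ M := by
  have hle : ∀ f : Fin M → Fin N, (Finset.image f Finset.univ).card ≤ M := fun f =>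
    (Finset.card_image_le).trans_eq (by simp)
  have hS : (∑ f : Fin M → Fin N, ((M - (Finset.image f Finset.univ).card : ℕ) : ℝ))
      = (N : ℝ) ^ M * M - N * ((N : ℝ) ^ M - ((N : ℝ) - 1) ^ M) := by
    have : ∀ f : Fin M → Fin N, ((M - (Finset.image f Finset.univ).card : ℕ) : ℝ)
        = (M : ℝ) - ((Finset.image f Finset.univ).card : ℕ) := by
      intro f; rw [Nat.cast_sub (hle f)]
    rw [Finset.sum_congr rfl fun f _ => this f, Finset.sum_sub_distrib]
    rw [Finset.sum_const, ← Nat.cast_sum, sum_card]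
    have hpow : (N - 1) ^ M ≤ N ^ M := Nat.pow_le_pow_left (Nat.sub_le N 1) M
    have hc1 : ((N - 1 : ℕ) : ℝ) = (N : ℝ) - 1 := by
      rw [Nat.cast_sub hN]; norm_num
    push_cast [Nat.sub_le, hpow, hc1]
    simp [Fintype.card_fun, mul_comm]
  rw [hS]
  have hN' : (N : ℝ) ≠ 0 := Nat.cast_ne_zero.mpr hN.ne'
  rw [div_pow]
  field_simp
  ring
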